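/- Suppose U₁U₂ < 0, x₁ < x₂, and x₂ - x₁ > 1/U₁ + 1/U₂. Then the equation (2z - U₁)(2z - U₂) = U₁U₂·e^{2(x₁-x₂)z} has exactly one solution z > 0. -/

import Mathlib

/-- If `U₁U₂ < 0`, `x₁ < x₂` and `x₂ - x₁ > 1/U₁ + 1/U₂`, then the equation
`(2z - U₁)(2z - U₂) = U₁U₂·e^{2(x₁-x₂)z}` has exactly one positive solution. -/
theorem one_bound_state_mixed (U₁ U₂ x₁ x₂ : ℝ) (hU : U₁ * U₂ < 0)
    (hx : x₁ < x₂) (hx' : x₂ - x₁ > 1 / U₁ + 1 / U₂) :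
    ∃! z : ℝ, 0 < z ∧
      (2 * z - U₁) * (2 * z - U₂) = U₁ * U₂ * Real.exp (2 * (x₁ - x₂) * z) := by
  have ha : U₁ ≠ 0 := fun h => by simp [h] at hU
  have hb : U₂ ≠ 0 := fun h => by simp [h] at hU
  set r : ℝ := 2 * (x₁ - x₂) with hr
  have hrneg : r < 0 := by simp only [hr]; nlinarith
  set f : ℝ → ℝ := fun z => (2 * z - U₁) * (2 * z - U₂) - U₁ * U₂ * Real.exp (r * z)
    with hfdef
  set f' : ℝ → ℝ := fun z => 8 * z - 2 * (U₁ + U₂) - U₁ * U₂ * r * Real.exp (r * z)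
    with hf'def
  have hd : ∀ z, HasDerivAt f (f' z) z := by
    intro z
    have h1 : HasDerivAt (fun z : ℝ => 2 * z - U₁) 2 z := by
      simpa using ((hasDerivAt_id z).const_mul 2).sub_const U₁
    have h2 : HasDerivAt (fun z : ℝ => 2 * z - U₂) 2 z := by
      simpa using ((hasDerivAt_id z).const_mul 2).sub_const U₂
    have h3 : HasDerivAt (fun z : ℝ => Real.exp (r * z)) (Real.exp (r * z) * r) z := by
      simpa [Function.comp_def] using (Real.hasDerivAt_exp (r * z)).comp z ((hasDerivAt_id z).const_mul r)
    have := (h1.mul h2).sub ((h3.const_mul (U₁ * U₂)))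
    convert this using 1
    · rfl
    · rfl
    · rfl
    simp only [hf'def]; ring
  have hd' : ∀ z, HasDerivAt f' (8 - U₁ * U₂ * r ^ 2 * Real.exp (r * z)) z := by
    intro z
    have h3 : HasDerivAt (fun z : ℝ => Real.exp (r * z)) (Real.exp (r * z) * r) z := by
      simpa [Function.comp_def] using (Real.hasDerivAt_exp (r * z)).comp z ((hasDerivAt_id z).const_mul r)
    have h4 : HasDerivAt (fun z : ℝ => 8 * z - 2 * (U₁ + U₂)) 8 z := by
      simpa using ((hasDerivAt_id z).const_mul 8).sub_const (2 * (U₁ + U₂))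
    have := h4.sub (h3.const_mul (U₁ * U₂ * r))
    convert this using 1
    · rfl
    · rfl
    · rfl
    ring
  have hcont : Continuous f := by
    apply Continuous.sub
    · fun_prop
    · fun_prop
  -- strict convexity
  have hsc : StrictConvexOn ℝ Set.univ f := by
    apply strictConvexOn_of_deriv2_pos convex_univ hcont.continuousOn
    intro z _
    have e1 : deriv f = f' := funext fun z => (hd z).deriv
    have : deriv (deriv f) z = 8 - U₁ * U₂ * r ^ 2 * Real.exp (r * z) := by
      rw [e1]; exact (hd' z).deriv
    simp only [Function.iterate_succ, Function.iterate_zero, Function.comp_apply, id]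
    rw [this]
    have := Real.exp_pos (r * z)
    nlinarith [sq_nonneg r, mul_pos (mul_pos (neg_pos.2 hU) (by nlinarith : (0:ℝ) < r ^ 2)) this]
  have hf0 : f 0 = 0 := by simp [hfdef]
  -- f'(0) < 0
  have hf'0 : f' 0 < 0 := by
    have key : U₁ * U₂ * (x₂ - x₁) < U₁ + U₂ := by
      have h1 : U₁ * U₂ * (x₂ - x₁) < U₁ * U₂ * (1 / U₁ + 1 / U₂) :=
        mul_lt_mul_of_neg_left hx' hU
      have h2 : U₁ * U₂ * (1 / U₁ + 1 / U₂) = U₂ + U₁ := by field_simp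
      linarith
    simp only [hf'def, hr]
    simp only [mul_zero, Real.exp_zero]
    nlinarith
  -- find a positive point where f is negative
  have hslope : Filter.Tendsto (slope f 0) (nhdsWithin 0 {(0:ℝ)}ᶜ) (nhds (f' 0)) :=
    hasDerivAt_iff_tendsto_slope.mp (hd 0)
  have hev : ∀ᶠ z in nhdsWithin (0:ℝ) (Set.Ioi 0), slope f 0 z < 0 := by
    have := hslope.eventually_lt_const hf'0
    exact (this.filter_mono (nhdsWithin_mono 0 (fun x hx => ne_of_gt hx)))
  have hev2 : ∀ᶠ z in nhdsWithin (0:ℝ) (Set.Ioi 0), z ∈ Set.Ioo (0:ℝ) 1 :=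
    Ioo_mem_nhdsGT_of_mem (Set.left_mem_Ico.2 one_pos)
  obtain ⟨z₀, hs₀, hz₀mem⟩ := (hev.and hev2).exists
  have hz₀pos : 0 < z₀ := hz₀mem.1
  have hfz₀neg : f z₀ < 0 := by
    have : (f z₀ - f 0) / (z₀ - 0) < 0 := by rw [← slope_def_field]; exact hs₀
    rw [hf0, sub_zero, sub_zero] at this
    rcases div_neg_iff.mp this with ⟨h1, h2⟩ | ⟨h1, h2⟩
    · linarith
    · linarith
  -- a large point where f is positive
  set Z : ℝ := (|U₁| + |U₂|) / 2 + 1 with hZdef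
  have hZ1 : (1:ℝ) ≤ Z := by
    have := abs_nonneg U₁; have := abs_nonneg U₂
    simp only [hZdef]; linarith
  have hfZpos : 0 < f Z := by
    have e1 : 0 < 2 * Z - U₁ := by
      have := le_abs_self U₁; have := abs_nonneg U₂
      simp only [hZdef]; linarith
    have e2 : 0 < 2 * Z - U₂ := by
      have := le_abs_self U₂; have := abs_nonneg U₁
      simp only [hZdef]; linarith
    have e3 : 0 < Real.exp (r * Z) := Real.exp_pos _
    simp only [hfdef]
    nlinarith [mul_pos e1 e2, mul_pos (neg_pos.2 hU) e3]
  have hz₀Z : z₀ < Z := lt_of_lt_of_le hz₀mem.2 hZ1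
  -- IVT
  have hivt := intermediate_value_Icc (le_of_lt hz₀Z) hcont.continuousOn
  have h0mem : (0:ℝ) ∈ Set.Icc (f z₀) (f Z) := ⟨le_of_lt hfz₀neg, le_of_lt hfZpos⟩
  obtain ⟨z, hzmem, hfz⟩ := hivt h0mem
  have hzpos : 0 < z := lt_of_lt_of_le hz₀pos hzmem.1
  -- key uniqueness lemma
  have key : ∀ p q : ℝ, 0 < p → p < q → f q = 0 → f p < 0 := by
    intro p q hp hpq hfq
    have hq : (0:ℝ) < q := lt_trans hp hpq
    have hne : (0:ℝ) ≠ q := ne_of_lt hq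
    have ht1 : 0 < 1 - p / q := by
      rw [sub_pos]; exact (div_lt_one hq).2 hpq
    have ht2 : 0 < p / q := div_pos hp hq
    have hsum : (1 - p / q) + p / q = 1 := by ring
    have := hsc.2 (Set.mem_univ (0:ℝ)) (Set.mem_univ q) hne ht1 ht2 hsum
    rw [hf0, hfq] at this
    simp only [smul_eq_mul, mul_zero, add_zero, zero_add] at this
    rwa [div_mul_cancel₀ p (ne_of_gt hq)] at this
  refine ⟨z, ⟨hzpos, by linarith [sub_eq_zero.mp hfz]⟩, ?_⟩
  · rintro y ⟨hy, hyeq⟩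
    have hfy : f y = 0 := by simp only [hfdef]; linarith [hyeq]
    by_contra hne
    rcases lt_or_gt_of_ne hne with h | h
    · exact absurd hfy (ne_of_lt (key y z hy h hfz))
    · exact absurd hfz (ne_of_lt (key z y hzpos h hfy))
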